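/- Suppose P occurs in the finite set D of definite clauses, P^{M,∘}(t̄) ∈ A, the induction identifier α does not occur in A, and for some k ∈ ℕ: μ(D) ⊨ ⟦{(α ▷ P(t̄), A, φ, h)}, {P^{M,α}(t̄)}⟧_k ∧ ⋀A ∧ φ ⇒ h. Then μ(D) ⊨ ⋀A ∧ φ ⇒ h. -/

import Mathlib

/-! Machinery for the inductive proof system for Horn constraint solving. -/

/-- Term variables. -/
abbrev Var := ℕ

/-- Assignments of integers to term variables. -/
abbrev Assign := Var → ℤ

/-- Linear integer arithmetic terms. -/
inductive Term : Type where
  | var : Var → Term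
  | const : ℤ → Term
  | add : Term → Term → Term

def Term.eval (s : Assign) : Term → ℤ
  | .var x => s x
  | .const n => n
  | .add t u => t.eval s + u.eval s

def Term.fv : Term → Finset Var
  | .var x => {x}
  | .const _ => ∅
  | .add t u => t.fv ∪ u.fv

/-- Substitutions of terms for term variables. -/
abbrev Subst := Var → Term

def Term.subst (σ : Subst) : Term → Term
  | .var x => σ x
  | .const n => .const n
  | .add t u => .add (t.subst σ) (u.subst σ)

/-- Atom-free linear integer arithmetic formulas; the universal quantifier `all` over
term variables is allowed where explicitly used. -/
inductive Fml : Type where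
  | le : Term → Term → Fml
  | tt : Fml
  | ff : Fml
  | not : Fml → Fml
  | and : Fml → Fml → Fml
  | or : Fml → Fml → Fml
  | all : Var → Fml → Fml

def Fml.eval : Fml → Assign → Prop
  | .le t u, s => t.eval s ≤ u.eval s
  | .tt, _ => True
  | .ff, _ => False
  | .not f, s => ¬ f.eval s
  | .and f g, s => f.eval s ∧ g.eval s
  | .or f g, s => f.eval s ∨ g.eval s
  | .all x f, s => ∀ n : ℤ, f.eval (Function.update s x n)

def Fml.fv : Fml → Finset Var
  | .le t u => t.fv ∪ u.fv
  | .tt => ∅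
  | .ff => ∅
  | .not f => f.fv
  | .and f g => f.fv ∪ g.fv
  | .or f g => f.fv ∪ g.fv
  | .all x f => f.fv.erase x

def Fml.subst : Fml → Subst → Fml
  | .le t u, σ => .le (t.subst σ) (u.subst σ)
  | .tt, _ => .tt
  | .ff, _ => .ff
  | .not f, σ => .not (f.subst σ)
  | .and f g, σ => .and (f.subst σ) (g.subst σ)
  | .or f g, σ => .or (f.subst σ) (g.subst σ)
  | .all x f, σ => .all x (f.subst (Function.update σ x (Term.var x)))

/-- Equality `t = u` of terms, encoded in QFLIA. -/
def Fml.eqT (t u : Term) : Fml := .and (.le t u) (.le u t)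

def Fml.conjList : List Fml → Fml
  | [] => .tt
  | f :: fs => .and f (Fml.conjList fs)

/-- Universal closure `∀x̄.f` over a list of variables. -/
def Fml.alls (xs : List Var) (f : Fml) : Fml := xs.foldr Fml.all f

/-- Componentwise equality `t̄ = ū` of two tuples of terms, as a formula. -/
def argsEqFml {n : ℕ} (ts us : Fin n → Term) : Fml :=
  Fml.conjList ((List.finRange n).map fun i => Fml.eqT (ts i) (us i))

/-- An atom `P(t̄)`. -/
structure Atom (PV : Type) (ar : PV → ℕ) : Type where
  pv : PV
  args : Fin (ar pv) → Term

/-- An annotated atom `P^{M,α}(t̄)`: `M` is a finite set of induction identifiers and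
`idn` is an induction identifier (`none` encodes the special identifier `∘`).
Annotations do not affect semantics. -/
structure AAtom (PV : Type) (ar : PV → ℕ) : Type where
  pv : PV
  args : Fin (ar pv) → Term
  M : Finset (Option ℕ)
  idn : Option ℕ

/-- A predicate interpretation maps each predicate variable `P` to a subset of `ℤ^(ar P)`. -/
abbrev Interp (PV : Type) (ar : PV → ℕ) := ∀ P : PV, Set (Fin (ar P) → ℤ)

variable {PV : Type} {ar : PV → ℕ}

def Atom.sat (ρ : Interp PV ar) (s : Assign) (a : Atom PV ar) : Prop :=
  (fun i => (a.args i).eval s) ∈ ρ a.pv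

def AAtom.sat (ρ : Interp PV ar) (s : Assign) (a : AAtom PV ar) : Prop :=
  (fun i => (a.args i).eval s) ∈ ρ a.pv

/-- The denotation `⟨P, t̄⟩` of an atom under an assignment (predicate variable together
with the tuple of values of the arguments). -/
def Atom.den (s : Assign) (a : Atom PV ar) : (Q : PV) × (Fin (ar Q) → ℤ) :=
  ⟨a.pv, fun i => (a.args i).eval s⟩

def AAtom.den (s : Assign) (a : AAtom PV ar) : (Q : PV) × (Fin (ar Q) → ℤ) :=
  ⟨a.pv, fun i => (a.args i).eval s⟩

def AList.sat (ρ : Interp PV ar) (s : Assign) (A : List (AAtom PV ar)) : Prop :=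
  ∀ a ∈ A, a.sat ρ s

/-- Satisfaction of a head: `⊥` (encoded `none`) or an atom. -/
def headSat (ρ : Interp PV ar) (s : Assign) : Option (Atom PV ar) → Prop
  | none => False
  | some a => a.sat ρ s

def Atom.fvs (a : Atom PV ar) : Finset Var := Finset.univ.sup fun i => (a.args i).fv
def AAtom.fvs (a : AAtom PV ar) : Finset Var := Finset.univ.sup fun i => (a.args i).fv

def headFvs : Option (Atom PV ar) → Finset Var
  | none => ∅
  | some a => a.fvs

def AList.fvs (A : List (AAtom PV ar)) : Finset Var := A.foldr (fun a t => a.fvs ∪ t) ∅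
def AtomList.fvs (A : List (Atom PV ar)) : Finset Var := A.foldr (fun a t => a.fvs ∪ t) ∅

def Atom.subst (σ : Subst) (a : Atom PV ar) : Atom PV ar :=
  ⟨a.pv, fun i => (a.args i).subst σ⟩

def AAtom.subst (σ : Subst) (a : AAtom PV ar) : AAtom PV ar :=
  ⟨a.pv, fun i => (a.args i).subst σ, a.M, a.idn⟩

def AList.subst (σ : Subst) (A : List (AAtom PV ar)) : List (AAtom PV ar) :=
  A.map (AAtom.subst σ)

def AtomList.subst (σ : Subst) (A : List (Atom PV ar)) : List (Atom PV ar) :=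
  A.map (Atom.subst σ)

def headSubst (σ : Subst) : Option (Atom PV ar) → Option (Atom PV ar)
  | none => none
  | some a => some (a.subst σ)

/-- `A^{M,α}`: annotate every atom of `A` with `M` and `α`. -/
def annotate (A : List (Atom PV ar)) (M : Finset (Option ℕ)) (i : Option ℕ) :
    List (AAtom PV ar) :=
  A.map fun a => ⟨a.pv, a.args, M, i⟩

/-- A renaming of variables, as a substitution. -/
def renSub (ν : Var → Var) : Subst := fun x => Term.var (ν x)

/-- A definite clause `P(t̄) ⇐ φ' ∧ ⋀A'`. -/
structure DClause (PV : Type) (ar : PV → ℕ) : Type where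
  pv : PV
  args : Fin (ar pv) → Term
  fml : Fml
  atoms : List (Atom PV ar)

def DClause.sat (ρ : Interp PV ar) (c : DClause PV ar) : Prop :=
  ∀ s : Assign, (∀ a ∈ c.atoms, a.sat ρ s) ∧ c.fml.eval s →
    (fun i => (c.args i).eval s) ∈ ρ c.pv

def DClause.fvs (c : DClause PV ar) : Finset Var :=
  (Finset.univ.sup fun i => (c.args i).fv) ∪ c.fml.fv ∪ AtomList.fvs c.atoms

/-- `μ(D)`: the least predicate interpretation satisfying every clause of `D`. -/
def muD (D : List (DClause PV ar)) : Interp PV ar :=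
  sInf {ρ : Interp PV ar | ∀ c ∈ D, c.sat ρ}

/-- One unfolding step of `D`:
`Dstep D ρ P = {x̄ | ρ ⊨ D(P)(x̄)}` where `D(P)(x̄) = ⋁ᵢ ∃ȳᵢ.(φᵢ ∧ ⋀Aᵢ ∧ x̄ = t̄ᵢ)`. -/
def Dstep (D : List (DClause PV ar)) (ρ : Interp PV ar) : Interp PV ar :=
  fun P => { v | ∃ c ∈ D, ∃ s : Assign,
    (∀ a ∈ c.atoms, a.sat ρ s) ∧ c.fml.eval s ∧
    (⟨c.pv, fun i => (c.args i).eval s⟩ : (Q : PV) × (Fin (ar Q) → ℤ)) = ⟨P, v⟩ }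

/-- Guards of elements of `Γ`: `•` for user-specified lemmas, `α ▷ P(t̄)` for
induction hypotheses. -/
inductive Guard (PV : Type) (ar : PV → ℕ) : Type where
  | bullet : Guard PV ar
  | hyp : ℕ → Atom PV ar → Guard PV ar

/-- An element `(g, A, φ, h)` of `Γ`. -/
structure GTuple (PV : Type) (ar : PV → ℕ) : Type where
  g : Guard PV ar
  A : List (AAtom PV ar)
  fml : Fml
  h : Option (Atom PV ar)

def Guard.fvs : Guard PV ar → Finset Var
  | .bullet => ∅
  | .hyp _ a => a.fvs

def GTuple.fvs (γ : GTuple PV ar) : Finset Var :=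
  γ.g.fvs ∪ AList.fvs γ.A ∪ γ.fml.fv ∪ headFvs γ.h

def Gamma.fvs (Γ : List (GTuple PV ar)) : Finset Var := Γ.foldr (fun γ t => γ.fvs ∪ t) ∅

/-- The free term variables of a judgment `D; Γ; A; φ ⊢ h`. -/
def judgFvs (Γ : List (GTuple PV ar)) (A : List (AAtom PV ar)) (φ : Fml)
    (h : Option (Atom PV ar)) : Finset Var :=
  Gamma.fvs Γ ∪ AList.fvs A ∪ φ.fv ∪ headFvs h

/-- `⟦γ⟧(A')`: the semantics of a single element of `Γ` instantiated for the atoms of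
`A'` (whose terms are evaluated under the outer assignment `s`); the tuple's own
variables are universally quantified via a fresh assignment `s'`. -/
def GTuple.sem (ρ : Interp PV ar) (A' : List (AAtom PV ar)) (s : Assign)
    (γ : GTuple PV ar) : Prop :=
  match γ.g with
  | .bullet =>
      ∀ s' : Assign, AList.sat ρ s' γ.A ∧ γ.fml.eval s' → headSat ρ s' γ.h
  | .hyp α a₀ =>
      ∀ b ∈ A', (some α : Option ℕ) ∈ b.M →
        ∀ s' : Assign,
          AList.sat ρ s' γ.A ∧ γ.fml.eval s' ∧ Atom.den s' a₀ = AAtom.den s b →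
          headSat ρ s' γ.h

/-- `⟦Γ⟧(A')`. -/
def GammaSem (ρ : Interp PV ar) (Γ : List (GTuple PV ar)) (A' : List (AAtom PV ar))
    (s : Assign) : Prop :=
  ∀ γ ∈ Γ, γ.sem ρ A' s

/-- `⟦Γ, A⟧_k`: the conjunction of the elements of `Γ` instantiated for the atoms
occurring in the `k`-times unfolding of `A` (by the definite clauses `D`). -/
def KSem (D : List (DClause PV ar)) (ρ : Interp PV ar) (Γ : List (GTuple PV ar)) :
    ℕ → List (AAtom PV ar) → Assign → Prop
  | 0, A, s => GammaSem ρ Γ A s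
  | k + 1, A, s =>
      GammaSem ρ Γ A s ∧
      ∀ b ∈ A, ∃ c ∈ D, ∃ s' : Assign,
        c.fml.eval s' ∧
        (⟨c.pv, fun i => (c.args i).eval s'⟩ : (Q : PV) × (Fin (ar Q) → ℤ)) =
          AAtom.den s b ∧
        KSem D ρ Γ k (annotate c.atoms (insert b.idn b.M) none) s'

/-- `⊨ φ ⇒ In(P(t̄), A)` where `In(P(t̄), A) = ⋁_{P(t̄') ∈ A} t̄ = t̄'`. -/
def validIn (φ : Fml) (a : Atom PV ar) (A : List (AAtom PV ar)) : Prop :=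
  ∀ s : Assign, φ.eval s → ∃ b ∈ A, Atom.den s a = AAtom.den s b

/-- `⊨ φ ⇒ In(σg, A)`. -/
def validInG (φ : Fml) (σ : Subst) (g : Guard PV ar) (A : List (AAtom PV ar)) : Prop :=
  match g with
  | .bullet => True
  | .hyp α a => ∀ s : Assign, φ.eval s →
      ∃ b ∈ A, (some α : Option ℕ) ∈ b.M ∧ Atom.den s (a.subst σ) = AAtom.den s b

/-- `⊨ φ ⇒ Sub(A₁, A₂)` where `Sub(A₁, A₂) = ⋀_{P(t̄) ∈ A₁} In(P(t̄), A₂)`. -/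
def validSub (φ : Fml) (A₁ A₂ : List (AAtom PV ar)) : Prop :=
  ∀ s : Assign, φ.eval s → ∀ a ∈ A₁, ∃ b ∈ A₂, AAtom.den s a = AAtom.den s b

def validSubAtoms (φ : Fml) (A₁ : List (Atom PV ar)) (A₂ : List (AAtom PV ar)) : Prop :=
  ∀ s : Assign, φ.eval s → ∀ a ∈ A₁, ∃ b ∈ A₂, Atom.den s a = AAtom.den s b

/-- `⊨ φ ⇒ ∃x̄.ψ`, where `x̄` is a given finite set of variables. -/
def validExists (φ : Fml) (ψ : Fml) (xs : Finset Var) : Prop :=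
  ∀ s : Assign, φ.eval s → ∃ s' : Assign, (∀ x, x ∉ xs → s' x = s x) ∧ ψ.eval s'

/-- The induction identifier `α` occurs in `A`. -/
def occursA (α : ℕ) (A : List (AAtom PV ar)) : Prop :=
  ∃ b ∈ A, (some α : Option ℕ) ∈ b.M ∨ b.idn = some α

def Guard.ident : Guard PV ar → Option ℕ
  | .bullet => none
  | .hyp α _ => some α

/-- The induction identifier `α` occurs in `Γ`. -/
def occursG (α : ℕ) (Γ : List (GTuple PV ar)) : Prop :=
  ∃ γ ∈ Γ, γ.g.ident = some α ∨ occursA α γ.A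

/-! Auxiliary machinery: finite approximants of `μ(D)`. -/

def iterD (D : List (DClause PV ar)) : ℕ → Interp PV ar
  | 0 => fun _ => ∅
  | n + 1 => Dstep D (iterD D n)

theorem Dstep_mono {D : List (DClause PV ar)} {ρ ρ' : Interp PV ar}
    (h : ∀ P, ρ P ⊆ ρ' P) : ∀ P, Dstep D ρ P ⊆ Dstep D ρ' P := by
  rintro P v ⟨c, hc, s, hat, hf, he⟩
  exact ⟨c, hc, s, fun a ha => h _ (hat a ha), hf, he⟩

theorem iterD_succ_le (D : List (DClause PV ar)) :
    ∀ n P, iterD D n P ⊆ iterD D (n + 1) P := by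
  intro n
  induction n with
  | zero => intro P v hv; exact hv.elim
  | succ n ih => exact Dstep_mono ih

theorem iterD_mono (D : List (DClause PV ar)) {m n : ℕ} (hmn : m ≤ n) :
    ∀ P, iterD D m P ⊆ iterD D n P := by
  induction hmn with
  | refl => exact fun P => le_refl _
  | step _ ih => exact fun P v hv => iterD_succ_le D _ P (ih P hv)

/-- The supremum of the approximants. -/
def supD (D : List (DClause PV ar)) : Interp PV ar :=
  fun P => { v | ∃ n, v ∈ iterD D n P }

theorem exists_bound (D : List (DClause PV ar)) (s : Assign) :
    ∀ l : List (Atom PV ar), (∀ a ∈ l, a.sat (supD D) s) →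
      ∃ N, ∀ a ∈ l, a.sat (iterD D N) s := by
  intro l
  induction l with
  | nil => exact fun _ => ⟨0, by simp⟩
  | cons a l ih =>
    intro hmem
    obtain ⟨n, hn⟩ := hmem a (by simp)
    obtain ⟨N, hN⟩ := ih (fun a' ha' => hmem a' (by simp [ha']))
    refine ⟨max n N, fun a' ha' => ?_⟩
    rcases List.mem_cons.mp ha' with rfl | ha'
    · exact iterD_mono D (le_max_left _ _) _ hn
    · exact iterD_mono D (le_max_right _ _) _ (hN a' ha')

theorem supD_sat (D : List (DClause PV ar)) : ∀ c ∈ D, c.sat (supD D) := by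
  intro c hc s ⟨hat, hf⟩
  obtain ⟨N, hN⟩ := exists_bound D s c.atoms hat
  exact ⟨N + 1, c, hc, s, hN, hf, rfl⟩

theorem muD_le_supD (D : List (DClause PV ar)) : ∀ P, muD D P ⊆ supD D P :=
  fun P v hv =>
    (sInf_le (show supD D ∈ {ρ : Interp PV ar | ∀ c ∈ D, c.sat ρ} from supD_sat D)) P hv

theorem sigma_cast {p q : (Q : PV) × (Fin (ar Q) → ℤ)} {I : Interp PV ar}
    (hpq : p = q) (hq : q.2 ∈ I q.1) : p.2 ∈ I p.1 := hpq ▸ hq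

theorem ksem_lemma (D : List (DClause PV ar)) (b : AAtom PV ar)
    (A : List (AAtom PV ar)) (φ : Fml) (h : Option (Atom PV ar)) (α : ℕ) (n : ℕ)
    (IH : ∀ m < n, ∀ s : Assign,
      AList.sat (muD D) s A ∧ φ.eval s ∧
        (fun i => (b.args i).eval s) ∈ iterD D m b.pv → headSat (muD D) s h) :
    ∀ (k : ℕ) (A' : List (AAtom PV ar)) (s : Assign),
      (∀ b' ∈ A', ∃ m, (fun i => (b'.args i).eval s) ∈ iterD D m b'.pv ∧
        ((some α : Option ℕ) ∈ b'.M → m < n) ∧ (b'.idn = some α → m ≤ n)) →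
      KSem D (muD D) [⟨Guard.hyp α ⟨b.pv, b.args⟩, A, φ, h⟩] k A' s := by
  have gsem : ∀ (A' : List (AAtom PV ar)) (s : Assign),
      (∀ b' ∈ A', ∃ m, (fun i => (b'.args i).eval s) ∈ iterD D m b'.pv ∧
        ((some α : Option ℕ) ∈ b'.M → m < n) ∧ (b'.idn = some α → m ≤ n)) →
      GammaSem (muD D) [⟨Guard.hyp α ⟨b.pv, b.args⟩, A, φ, h⟩] A' s := by
    intro A' s hinv γ hγ
    rcases List.mem_singleton.mp hγ with rfl
    intro b' hb' hM s' ⟨hA', hφ', hden⟩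
    obtain ⟨m, hmem, h1, _⟩ := hinv b' hb'
    exact IH m (h1 hM) s' ⟨hA', hφ', sigma_cast hden hmem⟩
  intro k
  induction k with
  | zero => exact fun A' s hinv => gsem A' s hinv
  | succ k ihk =>
    intro A' s hinv
    refine ⟨gsem A' s hinv, ?_⟩
    intro b' hb'
    obtain ⟨m, hmem, h1, h2⟩ := hinv b' hb'
    cases m with
    | zero => exact hmem.elim
    | succ m =>
      obtain ⟨c, hc, s'', hat, hf, he⟩ := hmem
      refine ⟨c, hc, s'', hf, he, ?_⟩
      apply ihk
      intro b'' hb''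
      obtain ⟨a, ha, rfl⟩ := List.mem_map.mp hb''
      refine ⟨m, hat a ha, ?_, ?_⟩
      · intro hM
        rcases Finset.mem_insert.mp hM with hM | hM
        · exact Nat.lt_of_succ_le (h2 hM.symm)
        · exact Nat.lt_of_succ_lt (h1 hM)
      · intro hcon; simp at hcon

/-- If `P` occurs in `D`, `P^{M,∘}(t̄) ∈ A`, `α` does not occur in
`A`, and `μ(D) ⊨ ⟦{(α ▷ P(t̄), A, φ, h)}, {P^{M,α}(t̄)}⟧_k ∧ ⋀A ∧ φ ⇒ h` for some `k`,
then `μ(D) ⊨ ⋀A ∧ φ ⇒ h`. -/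
theorem discharge_induction_hypothesis (D : List (DClause PV ar)) (b : AAtom PV ar)
    (A : List (AAtom PV ar)) (φ : Fml) (h : Option (Atom PV ar)) (α : ℕ) (k : ℕ)
    (hocc : ∃ c ∈ D, c.pv = b.pv ∨ ∃ a ∈ c.atoms, a.pv = b.pv)
    (hb : b ∈ A) (hidn : b.idn = none) (hα : ¬ occursA α A) :
    (∀ s : Assign,
      KSem D (muD D) [⟨Guard.hyp α ⟨b.pv, b.args⟩, A, φ, h⟩] k
          [⟨b.pv, b.args, b.M, some α⟩] s ∧
        AList.sat (muD D) s A ∧ φ.eval s →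
      headSat (muD D) s h) →
    ∀ s : Assign, AList.sat (muD D) s A ∧ φ.eval s → headSat (muD D) s h := by
  intro H
  have key : ∀ n, ∀ s : Assign,
      AList.sat (muD D) s A ∧ φ.eval s ∧
        (fun i => (b.args i).eval s) ∈ iterD D n b.pv → headSat (muD D) s h := by
    intro n
    induction n using Nat.strong_induction_on with
    | _ n IH =>
      intro s ⟨hA, hφ, hit⟩
      apply H s
      refine ⟨?_, hA, hφ⟩
      apply ksem_lemma D b A φ h α n (fun m hm => IH m hm) k
      intro b' hb'
      rcases List.mem_singleton.mp hb' with rfl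
      refine ⟨n, hit, ?_, fun _ => le_refl n⟩
      intro hM
      exact absurd ⟨b, hb, Or.inl hM⟩ hα
  intro s ⟨hA, hφ⟩
  obtain ⟨n, hn⟩ := muD_le_supD D b.pv (hA b hb)
  exact key n s ⟨hA, hφ, hn⟩
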